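/- The set of bipartite operators X_{AB} = (id^A ⊗ Φ^{B←A}) Σ_{i,j} ρ_{i,j} |ii⟩⟨jj|_{AA}, where Φ ranges over detection incoherent channels and ρ over quantum states, equals the set of operators Y_{AB} ≥ 0 with tr_B Y = Δ(σ_A) for some state σ_A and with diag(⟨i|_A Y |j⟩_A) = 0 for all i ≠ j (i.e., the B-diagonal of every off-diagonal A-block vanishes). -/

import Mathlib

set_option maxHeartbeats 1000000
set_option linter.unusedSectionVars false


open Matrix Complex
open scoped ComplexOrder

/-- A superoperator: a ℂ-linear map from operators on `ι` to operators on `κ`. -/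
abbrev SO (ι κ : Type*) [Fintype ι] [DecidableEq ι] [Fintype κ] [DecidableEq κ] :=
  Matrix ι ι ℂ →ₗ[ℂ] Matrix κ κ ℂ

/-- Choi matrix of a superoperator. -/
noncomputable def choi {ι κ : Type*} [Fintype ι] [DecidableEq ι] [Fintype κ] [DecidableEq κ]
    (Θ : SO ι κ) : Matrix (κ × ι) (κ × ι) ℂ :=
  Matrix.of fun p q => Θ (Matrix.single p.2 q.2 1) p.1 q.1

/-- A quantum state: positive semidefinite with unit trace. -/
def IsState {ι : Type*} [Fintype ι] (ρ : Matrix ι ι ℂ) : Prop := ρ.PosSemidef ∧ ρ.trace = 1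

/-- A quantum channel: completely positive (PSD Choi matrix) and trace preserving. -/
def IsChannel {ι κ : Type*} [Fintype ι] [DecidableEq ι] [Fintype κ] [DecidableEq κ]
    (Θ : SO ι κ) : Prop :=
  (choi Θ).PosSemidef ∧ ∀ ρ, (Θ ρ).trace = ρ.trace

/-- Total dephasing channel in the fixed incoherent basis. -/
noncomputable def deph {ι : Type*} [Fintype ι] [DecidableEq ι] : SO ι ι where
  toFun ρ := Matrix.of fun i j => if i = j then ρ i j else 0
  map_add' := by
    intro x y; ext i j
    by_cases h : i = j <;> simp [h]
  map_smul' := by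
    intro c x; ext i j
    by_cases h : i = j <;> simp [h]

/-- Phase-encoding unitary channel `Λ_φ`. -/
noncomputable def phaseCh {ι : Type*} [Fintype ι] [DecidableEq ι] (φ : ι → ℝ) : SO ι ι where
  toFun ρ := Matrix.of fun i j => Complex.exp (Complex.I * ((φ i : ℂ) - (φ j : ℂ))) * ρ i j
  map_add' := by
    intro x y; ext i j; simp [mul_add]
  map_smul' := by
    intro c x; ext i j; simp; ring

/-- The superoperator `λ·id − (1−λ)·Λ_φ`. -/
noncomputable def diffOp {ι : Type*} [Fintype ι] [DecidableEq ι] (lam : ℝ) (φ : ι → ℝ) :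
    SO ι ι :=
  (lam : ℂ) • LinearMap.id - ((1 - lam : ℝ) : ℂ) • phaseCh φ

/-- Trace norm of a matrix: sum of singular values. -/
noncomputable def traceNorm {ι : Type*} [Fintype ι] [DecidableEq ι]
    (M : Matrix ι ι ℂ) : ℝ :=
  ∑ i, Real.sqrt ((Matrix.isHermitian_conjTranspose_mul_self M).eigenvalues i)

/-- `Θ ⊗ id` acting on a composite system. -/
noncomputable def tensorId {ι κ ν : Type*} [Fintype ι] [DecidableEq ι] [Fintype κ]
    [DecidableEq κ] [Fintype ν] [DecidableEq ν] (Θ : SO ι κ) : SO (ι × ν) (κ × ν) where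
  toFun ρ := Matrix.of fun p q =>
    ∑ i, ∑ j, Θ (Matrix.single i j 1) p.1 q.1 * ρ (i, p.2) (j, q.2)
  map_add' := by
    intro x y; ext p q
    simp [Matrix.add_apply, mul_add, Finset.sum_add_distrib]
  map_smul' := by
    intro c x; ext p q
    simp only [Matrix.of_apply, Matrix.smul_apply, smul_eq_mul, RingHom.id_apply,
      Finset.mul_sum]
    exact Finset.sum_congr rfl fun i _ => Finset.sum_congr rfl fun j _ => by ring

/-- Detection incoherent channels: `Δ Φ = Δ Φ Δ`. -/
def IsDI {ι κ : Type*} [Fintype ι] [DecidableEq ι] [Fintype κ] [DecidableEq κ]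
    (Φ : SO ι κ) : Prop :=
  deph ∘ₗ Φ = deph ∘ₗ Φ ∘ₗ deph

/-- Maximally incoherent channels: `Ψ Δ = Δ Ψ Δ`. -/
def IsMIO {ι κ : Type*} [Fintype ι] [DecidableEq ι] [Fintype κ] [DecidableEq κ]
    (Ψ : SO ι κ) : Prop :=
  Ψ ∘ₗ deph = deph ∘ₗ Ψ ∘ₗ deph

/-- The pre-processed improvement `M_{λ,φ}(Θ)`. -/
noncomputable def Mpre {α β γ : Type*} [Fintype α] [DecidableEq α] [Fintype β] [DecidableEq β]
    [Fintype γ] [DecidableEq γ] (lam : ℝ) (φ : α → ℝ) (Θ : SO β γ) : ℝ :=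
  sSup {x : ℝ | ∃ (Φ : SO α β) (ρ : Matrix α α ℂ), IsChannel Φ ∧ IsDI Φ ∧ IsState ρ ∧
    x = traceNorm (deph (Θ (Φ (diffOp lam φ ρ))))} - |lam - (1 - lam)|

/-- The post-processed improvement `N_{λ,φ}(Θ)`. -/
noncomputable def Npost {α β γ : Type*} [Fintype α] [DecidableEq α] [Fintype β] [DecidableEq β]
    [Fintype γ] [DecidableEq γ] (lam : ℝ) (φ : γ → ℝ) (Θ : SO α β) : ℝ :=
  sSup {x : ℝ | ∃ (Ψ : SO β γ) (ρ : Matrix α α ℂ), IsChannel Ψ ∧ IsMIO Ψ ∧ IsState ρ ∧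
    x = traceNorm (diffOp lam φ (Ψ (Θ (deph ρ))))} - |lam - (1 - lam)|


lemma psd_sum {n ι : Type*} [Fintype n] (s : Finset ι) (f : ι → Matrix n n ℂ)
    (h : ∀ i ∈ s, (f i).PosSemidef) : (∑ i ∈ s, f i).PosSemidef := by
  classical
  induction s using Finset.induction with
  | empty => simpa using Matrix.PosSemidef.zero
  | @insert a s ha ih =>
    rw [Finset.sum_insert ha]
    exact (h _ (Finset.mem_insert_self _ _)).add
      (ih fun i hi => h i (Finset.mem_insert_of_mem hi))

lemma psd_diag_nonneg {n : Type*} [Fintype n] [DecidableEq n] {M : Matrix n n ℂ}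
    (hM : M.PosSemidef) (i : n) : 0 ≤ M i i := by
  exact hM.diag_nonneg

open scoped MatrixOrder in
lemma psd_iff_eq_ct_mul_self {n : Type*} [Fintype n] [DecidableEq n] {M : Matrix n n ℂ} :
    M.PosSemidef ↔ ∃ B : Matrix n n ℂ, M = Bᴴ * B := by
  constructor
  · intro hM
    obtain ⟨B, hB⟩ := CStarAlgebra.nonneg_iff_eq_star_mul_self.mp hM.nonneg
    exact ⟨B, by rw [hB]; rfl⟩
  · rintro ⟨B, rfl⟩
    exact Matrix.posSemidef_conjTranspose_mul_self B

lemma psd_row_zero {n : Type*} [Fintype n] [DecidableEq n] {M : Matrix n n ℂ}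
    (hM : M.PosSemidef) {i : n} (hi : M i i = 0) (j : n) :
    M i j = 0 ∧ M j i = 0 := by
  obtain ⟨B, rfl⟩ := psd_iff_eq_ct_mul_self.mp hM
  have hcol : ∀ k, B k i = 0 := by
    have h1 : (∑ k, Complex.normSq (B k i) : ℝ) = 0 := by
      have := congrArg Complex.re hi
      simpa [Matrix.mul_apply, Complex.mul_conj', Complex.normSq] using this
    intro k
    have h2 : Complex.normSq (B k i) = 0 := by
      have := (Finset.sum_eq_zero_iff_of_nonneg (fun k _ => Complex.normSq_nonneg (B k i))).mp h1
      exact this k (Finset.mem_univ k)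
    exact Complex.normSq_eq_zero.mp h2
  constructor <;> simp [Matrix.mul_apply, hcol]

section Fwd
variable {A B : Type*} [Fintype A] [DecidableEq A] [Nonempty A]
    [Fintype B] [DecidableEq B] [Nonempty B]

lemma choi_apply (Φ : SO A B) (b b' : B) (i j : A) :
    choi Φ (b, i) (b', j) = Φ (Matrix.single i j 1) b b' := rfl

lemma deph_apply {ι : Type*} [Fintype ι] [DecidableEq ι] (M : Matrix ι ι ℂ) (i j : ι) :
    deph M i j = if i = j then M i j else 0 := rfl

lemma fwd_psd (Φ : SO A B) (ρ : Matrix A A ℂ) (hch : IsChannel Φ) (hρ : IsState ρ) :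
    (Matrix.of fun p q : A × B =>
      ρ p.1 q.1 * Φ (Matrix.single p.1 q.1 1) p.2 q.2).PosSemidef := by
  obtain ⟨S, hS⟩ := psd_iff_eq_ct_mul_self.mp hρ.1
  set Mk : A → Matrix (B × A) (A × B) ℂ :=
    fun k => Matrix.of fun r q => if r = (q.2, q.1) then S k q.1 else 0 with hMk
  have key : (Matrix.of fun p q : A × B =>
      ρ p.1 q.1 * Φ (Matrix.single p.1 q.1 1) p.2 q.2)
      = ∑ k, (Mk k)ᴴ * (choi Φ) * (Mk k) := by
    ext p q
    have hf : ∀ k, ((Mk k)ᴴ * (choi Φ) * (Mk k)) p q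
        = star (S k p.1) * choi Φ (p.2, p.1) (q.2, q.1) * S k q.1 := by
      intro k
      simp only [Matrix.mul_apply, Matrix.conjTranspose_apply, hMk, Matrix.of_apply,
        apply_ite star, star_zero, ite_mul, zero_mul, mul_ite, mul_zero,
        Finset.sum_ite_eq, Finset.sum_ite_eq', Finset.mem_univ, if_true]
    rw [Matrix.sum_apply]
    simp only [hf]
    have hρij : ρ p.1 q.1 = ∑ k, star (S k p.1) * S k q.1 := by
      rw [hS]; simp [Matrix.mul_apply, Matrix.conjTranspose_apply]
    rw [Matrix.of_apply, hρij, Finset.sum_mul]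
    exact Finset.sum_congr rfl fun k _ => by rw [choi_apply]; ring
  rw [key]
  exact psd_sum _ _ fun k _ => hch.1.conjTranspose_mul_mul_same _

end Fwd

section Fwd2
variable {A B : Type*} [Fintype A] [DecidableEq A] [Nonempty A]
    [Fintype B] [DecidableEq B] [Nonempty B]

lemma fwd_offdiag (Φ : SO A B) (hdi : IsDI Φ) {i j : A} (hij : i ≠ j) (b : B) :
    Φ (Matrix.single i j 1) b b = 0 := by
  have hdeph0 : deph (Matrix.single i j 1) = 0 := by
    ext k l
    simp only [deph_apply, Matrix.single, Matrix.of_apply, Matrix.zero_apply]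
    split
    · rename_i h; subst h
      rw [if_neg]; rintro ⟨rfl, rfl⟩; exact hij rfl
    · rfl
  have := congrFun (congrArg (fun f => f (Matrix.single i j 1)) hdi)
  have h2 : deph (Φ (Matrix.single i j 1)) = 0 := by
    have h3 := congrArg (fun f => f (Matrix.single i j 1)) hdi
    simp only [LinearMap.comp_apply] at h3
    rw [h3, hdeph0, map_zero, map_zero]
  have h4 := congrFun (congrFun (congrArg (fun M => (M : B → B → ℂ)) h2) b) b
  simpa [deph_apply] using h4

lemma fwd_ptrace (Φ : SO A B) (ρ : Matrix A A ℂ) (hch : IsChannel Φ) :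
    (Matrix.of fun i j : A => ∑ b, (Matrix.of fun p q : A × B =>
      ρ p.1 q.1 * Φ (Matrix.single p.1 q.1 1) p.2 q.2) (i, b) (j, b)) = deph ρ := by
  ext i j
  simp only [Matrix.of_apply, deph_apply]
  rw [← Finset.mul_sum]
  have htr : ∑ b, Φ (Matrix.single i j 1) b b = if i = j then 1 else 0 := by
    have := hch.2 (Matrix.single i j 1)
    rw [Matrix.trace] at this
    simp only [Matrix.diag] at this
    rw [this]
    by_cases h : i = j
    · subst h; simp [Matrix.trace, Matrix.diag, Matrix.single]
    · rw [if_neg h, Matrix.trace]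
      apply Finset.sum_eq_zero
      intro x _
      simp only [Matrix.diag, Matrix.single, Matrix.of_apply]
      rw [if_neg]; rintro ⟨rfl, rfl⟩; exact h rfl
  rw [htr]
  split <;> simp

end Fwd2

section Bwd
variable {A B : Type*} [Fintype A] [DecidableEq A] [Nonempty A]
    [Fintype B] [DecidableEq B] [Nonempty B]

noncomputable def pfun (σ : Matrix A A ℂ) (i : A) : ℝ := (σ i i).re

noncomputable def cfun (σ : Matrix A A ℂ) (i : A) : ℝ := Real.sqrt (pfun σ i)

noncomputable def Kfun (Y : Matrix (A × B) (A × B) ℂ) (σ : Matrix A A ℂ)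
    (i j : A) (b b' : B) : ℂ :=
  if 0 < pfun σ i ∧ 0 < pfun σ j then
    Y (i, b) (j, b') / ((cfun σ i : ℂ) * (cfun σ j : ℂ))
  else if i = j ∧ b = Classical.arbitrary B ∧ b' = Classical.arbitrary B then 1 else 0

noncomputable def PhiY (Y : Matrix (A × B) (A × B) ℂ) (σ : Matrix A A ℂ) : SO A B where
  toFun M := Matrix.of fun b b' => ∑ i, ∑ j, Kfun Y σ i j b b' * M i j
  map_add' := by
    intro x y; ext b b'
    simp [Matrix.add_apply, mul_add, Finset.sum_add_distrib]
  map_smul' := by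
    intro t x; ext b b'
    simp only [Matrix.smul_apply, smul_eq_mul, RingHom.id_apply, Matrix.of_apply,
      Finset.mul_sum]
    exact Finset.sum_congr rfl fun i _ => Finset.sum_congr rfl fun j _ => by ring

lemma PhiY_apply_std (Y : Matrix (A × B) (A × B) ℂ) (σ : Matrix A A ℂ)
    (i j : A) (b b' : B) :
    PhiY Y σ (Matrix.single i j 1) b b' = Kfun Y σ i j b b' := by
  show (∑ k, ∑ l, Kfun Y σ k l b b' *
      (Matrix.single i j 1 : Matrix A A ℂ) k l) = Kfun Y σ i j b b'
  simp [Matrix.single, ite_and, mul_ite, mul_one, mul_zero,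
    Finset.sum_ite_eq, Finset.sum_ite_eq']

lemma choi_PhiY (Y : Matrix (A × B) (A × B) ℂ) (σ : Matrix A A ℂ) (r s : B × A) :
    choi (PhiY Y σ) r s = Kfun Y σ r.2 s.2 r.1 s.1 := by
  obtain ⟨b, i⟩ := r; obtain ⟨b', j⟩ := s
  exact PhiY_apply_std Y σ i j b b'

end Bwd

section Bwd2
variable {A B : Type*} [Fintype A] [DecidableEq A] [Nonempty A]
    [Fintype B] [DecidableEq B] [Nonempty B]

lemma choi_PhiY_psd (Y : Matrix (A × B) (A × B) ℂ) (σ : Matrix A A ℂ)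
    (hY : Y.PosSemidef) : (choi (PhiY Y σ)).PosSemidef := by
  classical
  set b0 := Classical.arbitrary B with hb0
  set Mm : Matrix (A × B) (B × A) ℂ := Matrix.of fun r q =>
    if r = (q.2, q.1) ∧ 0 < pfun σ q.2 then ((cfun σ q.2 : ℂ))⁻¹ else 0 with hMm
  set Nm : Matrix A (B × A) ℂ := Matrix.of fun k q =>
    if q.2 = k ∧ q.1 = b0 ∧ ¬ 0 < pfun σ k then 1 else 0 with hNm
  have key : choi (PhiY Y σ) = Mmᴴ * Y * Mm + Nmᴴ * Nm := by
    ext r s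
    obtain ⟨b, i⟩ := r; obtain ⟨b', j⟩ := s
    rw [choi_PhiY]
    have h1 : (Mmᴴ * Y * Mm) (b, i) (b', j)
        = (if 0 < pfun σ i then ((cfun σ i : ℂ))⁻¹ else 0) * Y (i, b) (j, b')
          * (if 0 < pfun σ j then ((cfun σ j : ℂ))⁻¹ else 0) := by
      simp only [Matrix.mul_apply, Matrix.conjTranspose_apply, hMm, Matrix.of_apply,
        ite_and, apply_ite star, star_zero, star_inv₀, Complex.star_def,
        Complex.conj_ofReal, ite_mul, zero_mul, mul_ite, mul_zero,
        Finset.sum_ite_eq, Finset.sum_ite_eq', Finset.mem_univ, if_true]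
    have h2 : (Nmᴴ * Nm) (b, i) (b', j)
        = if i = j ∧ b = b0 ∧ b' = b0 ∧ ¬ 0 < pfun σ i then 1 else 0 := by
      rw [Matrix.mul_apply]
      simp only [Matrix.conjTranspose_apply, hNm, Matrix.of_apply]
      rw [Finset.sum_eq_single i]
      · by_cases hij : i = j
        · subst hij
          by_cases hb : b = b0 <;> by_cases hb' : b' = b0 <;>
            by_cases hpi : 0 < pfun σ i <;> simp [hb, hb', hpi]
        · have hji : ¬ (j = i) := fun h => hij h.symm
          simp [hji, hij]
      · intro k _ hk
        have : ¬ (i = k) := fun h => hk h.symm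
        simp [this]
      · simp
    rw [Matrix.add_apply, h1, h2, Kfun]
    by_cases hp : 0 < pfun σ i ∧ 0 < pfun σ j
    · have hpi' : ¬ (i = j ∧ b = b0 ∧ b' = b0 ∧ ¬ 0 < pfun σ i) := by
        rintro ⟨_, _, _, h⟩; exact h hp.1
      rw [if_pos hp, if_pos hp.1, if_pos hp.2, if_neg hpi', div_eq_mul_inv, mul_inv]
      ring
    · rw [if_neg hp]
      have h1z : (if 0 < pfun σ i then ((cfun σ i : ℂ))⁻¹ else 0) * Y (i, b) (j, b')
          * (if 0 < pfun σ j then ((cfun σ j : ℂ))⁻¹ else 0) = 0 := by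
        by_cases hpi : 0 < pfun σ i
        · have hpj : ¬ 0 < pfun σ j := fun h => hp ⟨hpi, h⟩
          simp [hpj]
        · simp [hpi]
      rw [h1z, zero_add]
      by_cases hij : i = j
      · subst hij
        have hpi : ¬ 0 < pfun σ i := fun h => hp ⟨h, h⟩
        simp [hpi, hb0]
      · simp [hij]
  rw [key]
  exact (hY.conjTranspose_mul_mul_same Mm).add (Matrix.posSemidef_conjTranspose_mul_self Nm)

end Bwd2

section Bwd3
variable {A B : Type*} [Fintype A] [DecidableEq A] [Nonempty A]
    [Fintype B] [DecidableEq B] [Nonempty B]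

lemma PhiY_apply (Y : Matrix (A × B) (A × B) ℂ) (σ : Matrix A A ℂ) (M : Matrix A A ℂ)
    (b b' : B) : PhiY Y σ M b b' = ∑ i, ∑ j, Kfun Y σ i j b b' * M i j := rfl

lemma cc_eq (σ : Matrix A A ℂ) (i : A) (h : 0 ≤ pfun σ i) :
    (cfun σ i : ℂ) * (cfun σ i : ℂ) = ((pfun σ i : ℝ) : ℂ) := by
  rw [← Complex.ofReal_mul]
  norm_cast
  exact Real.mul_self_sqrt h

lemma Ksum (Y : Matrix (A × B) (A × B) ℂ) (σ : Matrix A A ℂ)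
    (hp0 : ∀ i, 0 ≤ pfun σ i)
    (hsum : ∀ i j : A, ∑ b, Y (i, b) (j, b) = if i = j then ((pfun σ i : ℝ) : ℂ) else 0)
    (i j : A) : ∑ b, Kfun Y σ i j b b = if i = j then 1 else 0 := by
  classical
  by_cases hp : 0 < pfun σ i ∧ 0 < pfun σ j
  · simp only [Kfun, if_pos hp]
    rw [← Finset.sum_div, hsum i j]
    by_cases hij : i = j
    · subst hij
      rw [if_pos rfl, if_pos rfl, cc_eq σ i (hp0 i), div_self]
      exact_mod_cast (ne_of_gt hp.1)
    · rw [if_neg hij, if_neg hij, zero_div]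
  · simp only [Kfun, if_neg hp]
    by_cases hij : i = j
    · subst hij
      simp
    · simp [hij]

lemma PhiY_tp (Y : Matrix (A × B) (A × B) ℂ) (σ : Matrix A A ℂ)
    (hp0 : ∀ i, 0 ≤ pfun σ i)
    (hsum : ∀ i j : A, ∑ b, Y (i, b) (j, b) = if i = j then ((pfun σ i : ℝ) : ℂ) else 0)
    (M : Matrix A A ℂ) : (PhiY Y σ M).trace = M.trace := by
  rw [Matrix.trace, Matrix.trace]
  have : ∀ b, (PhiY Y σ M).diag b = ∑ i, ∑ j, Kfun Y σ i j b b * M i j := fun b => rfl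
  simp only [this]
  calc ∑ b, ∑ i, ∑ j, Kfun Y σ i j b b * M i j
      = ∑ i, ∑ j, (∑ b, Kfun Y σ i j b b) * M i j := by
        rw [Finset.sum_comm]
        refine Finset.sum_congr rfl fun i _ => ?_
        rw [Finset.sum_comm]
        exact Finset.sum_congr rfl fun j _ => (Finset.sum_mul _ _ _).symm
    _ = ∑ i, M.diag i := by
        refine Finset.sum_congr rfl fun i _ => ?_
        simp [Ksum Y σ hp0 hsum i, ite_mul, Finset.sum_ite_eq, Matrix.diag]

lemma PhiY_di (Y : Matrix (A × B) (A × B) ℂ) (σ : Matrix A A ℂ)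
    (hKoff : ∀ i j : A, i ≠ j → ∀ b, Kfun Y σ i j b b = 0) : IsDI (PhiY Y σ) := by
  apply LinearMap.ext
  intro M
  ext b b'
  simp only [LinearMap.comp_apply]
  rw [deph_apply, deph_apply]
  by_cases hb : b = b'
  · subst hb
    rw [if_pos rfl, if_pos rfl, PhiY_apply, PhiY_apply]
    refine Finset.sum_congr rfl fun i _ => Finset.sum_congr rfl fun j _ => ?_
    by_cases hij : i = j
    · subst hij
      rw [deph_apply, if_pos rfl]
    · rw [hKoff i j hij b, zero_mul, zero_mul]
  · rw [if_neg hb, if_neg hb]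

end Bwd3

section Bwd4
variable {A B : Type*} [Fintype A] [DecidableEq A] [Nonempty A]
    [Fintype B] [DecidableEq B] [Nonempty B]

lemma bwd_main (Y : Matrix (A × B) (A × B) ℂ) (hY : Y.PosSemidef)
    (σ : Matrix A A ℂ) (hσ : IsState σ)
    (hptr : (Matrix.of fun i j : A => ∑ b, Y (i, b) (j, b)) = deph σ)
    (hoff : ∀ i j : A, i ≠ j → ∀ b : B, Y (i, b) (j, b) = 0) :
    ∃ (Φ : SO A B) (ρ : Matrix A A ℂ), IsChannel Φ ∧ IsDI Φ ∧ IsState ρ ∧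
      (Matrix.of fun p q : A × B =>
        ρ p.1 q.1 * Φ (Matrix.single p.1 q.1 1) p.2 q.2) = Y := by
  classical
  have hσd : ∀ i, σ i i = ((pfun σ i : ℝ) : ℂ) := by
    intro i
    have h : (starRingEnd ℂ) (σ i i) = σ i i := hσ.1.1.apply i i
    exact (Complex.conj_eq_iff_re.mp h).symm
  have hp0 : ∀ i, 0 ≤ pfun σ i := by
    intro i
    have h := psd_diag_nonneg hσ.1 i
    have := (Complex.le_def.mp h).1
    simpa [pfun] using this
  have hsum : ∀ i j : A, ∑ b, Y (i, b) (j, b)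
      = if i = j then ((pfun σ i : ℝ) : ℂ) else 0 := by
    intro i j
    have h := congrArg (fun M => M i j) hptr
    simp only [Matrix.of_apply] at h
    rw [h, deph_apply]
    by_cases hij : i = j
    · subst hij; rw [if_pos rfl, if_pos rfl, hσd]
    · rw [if_neg hij, if_neg hij]
  have hzero : ∀ i, pfun σ i = 0 → ∀ (b : B) (q : A × B),
      Y (i, b) q = 0 ∧ Y q (i, b) = 0 := by
    intro i hpi b q
    have hdz : Y (i, b) (i, b) = 0 := by
      have hs : ∑ b', Y (i, b') (i, b') = 0 := by
        rw [hsum i i, if_pos rfl, hpi]; simp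
      have := (Finset.sum_eq_zero_iff_of_nonneg
        (fun b' _ => psd_diag_nonneg hY (i, b'))).mp hs
      exact this b (Finset.mem_univ b)
    exact psd_row_zero hY hdz q
  have hKoff : ∀ i j : A, i ≠ j → ∀ b : B, Kfun Y σ i j b b = 0 := by
    intro i j hij b
    by_cases hp : 0 < pfun σ i ∧ 0 < pfun σ j
    · rw [Kfun, if_pos hp, hoff i j hij b, zero_div]
    · rw [Kfun, if_neg hp, if_neg]
      rintro ⟨h, -⟩; exact hij h
  refine ⟨PhiY Y σ, Matrix.of fun i j : A => (cfun σ i : ℂ) * (cfun σ j : ℂ),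
    ⟨choi_PhiY_psd Y σ hY, PhiY_tp Y σ hp0 hsum⟩, PhiY_di Y σ hKoff, ⟨?_, ?_⟩, ?_⟩
  · refine psd_iff_eq_ct_mul_self.mpr
      ⟨Matrix.of fun k i : A => if k = Classical.arbitrary A
        then ((cfun σ i : ℝ) : ℂ) else 0, ?_⟩
    ext i j
    simp [Matrix.mul_apply, Matrix.conjTranspose_apply, apply_ite star,
      Complex.star_def, Complex.conj_ofReal, ite_mul, zero_mul, mul_ite, mul_zero,
      Finset.sum_ite_eq, Finset.sum_ite_eq']
  · have : ∀ i, (Matrix.of fun i j : A => (cfun σ i : ℂ) * (cfun σ j : ℂ)).diag i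
        = σ i i := by
      intro i
      show (cfun σ i : ℂ) * (cfun σ i : ℂ) = σ i i
      rw [cc_eq σ i (hp0 i), hσd]
    rw [Matrix.trace]
    simp only [this]
    exact hσ.2
  · ext p q
    obtain ⟨i, b⟩ := p; obtain ⟨j, b'⟩ := q
    rw [Matrix.of_apply]
    show (cfun σ i : ℂ) * (cfun σ j : ℂ) * PhiY Y σ (Matrix.single i j 1) b b'
      = Y (i, b) (j, b')
    rw [PhiY_apply_std]
    by_cases hp : 0 < pfun σ i ∧ 0 < pfun σ j
    · have hci : (cfun σ i : ℂ) ≠ 0 := by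
        exact_mod_cast (ne_of_gt (Real.sqrt_pos.mpr hp.1))
      have hcj : (cfun σ j : ℂ) ≠ 0 := by
        exact_mod_cast (ne_of_gt (Real.sqrt_pos.mpr hp.2))
      rw [Kfun, if_pos hp, mul_comm, div_mul_cancel₀ _ (mul_ne_zero hci hcj)]
    · have hY0 : Y (i, b) (j, b') = 0 := by
        rcases not_and_or.mp hp with h | h
        · exact (hzero i (le_antisymm (not_lt.mp h) (hp0 i)) b (j, b')).1
        · exact (hzero j (le_antisymm (not_lt.mp h) (hp0 j)) b' (i, b)).2
      have hc0 : (cfun σ i : ℂ) * (cfun σ j : ℂ) = 0 := by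
        rcases not_and_or.mp hp with h | h
        · have : cfun σ i = 0 := by
            rw [cfun, le_antisymm (not_lt.mp h) (hp0 i), Real.sqrt_zero]
          rw [this]; simp
        · have : cfun σ j = 0 := by
            rw [cfun, le_antisymm (not_lt.mp h) (hp0 j), Real.sqrt_zero]
          rw [this]; simp
      rw [hc0, zero_mul, hY0]

end Bwd4


/-- characterization of the operators `(id ⊗ Φ) Σ ρ_{ij} |ii⟩⟨jj|` for a
detection incoherent channel `Φ` and a state `ρ`: they are exactly the PSD operators whose
partial trace over `B` is a diagonal state and whose off-diagonal `A`-blocks have vanishing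
`B`-diagonal. -/
theorem DI_state_set_eq {A B : Type*} [Fintype A] [DecidableEq A] [Nonempty A]
    [Fintype B] [DecidableEq B] [Nonempty B] :
    {X : Matrix (A × B) (A × B) ℂ | ∃ (Φ : SO A B) (ρ : Matrix A A ℂ),
        IsChannel Φ ∧ IsDI Φ ∧ IsState ρ ∧
        X = Matrix.of fun p q =>
          ρ p.1 q.1 * Φ (Matrix.single p.1 q.1 1) p.2 q.2}
      = {Y : Matrix (A × B) (A × B) ℂ | Y.PosSemidef ∧
          (∃ σ : Matrix A A ℂ, IsState σ ∧
            (Matrix.of fun i j : A => ∑ b, Y (i, b) (j, b)) = deph σ) ∧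
          ∀ i j : A, i ≠ j → ∀ b : B, Y (i, b) (j, b) = 0} := by

  ext Y
  simp only [Set.mem_setOf_eq]
  constructor
  · rintro ⟨Φ, ρ, hch, hdi, hρ, rfl⟩
    refine ⟨fwd_psd Φ ρ hch hρ, ⟨ρ, hρ, fwd_ptrace Φ ρ hch⟩, ?_⟩
    intro i j hij b
    show ρ i j * Φ (Matrix.single i j 1) b b = 0
    rw [fwd_offdiag Φ hdi hij b, mul_zero]
  · rintro ⟨hY, ⟨σ, hσ, hptr⟩, hoff⟩
    obtain ⟨Φ, ρ, h1, h2, h3, h4⟩ := bwd_main Y hY σ hσ hptr hoff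
    exact ⟨Φ, ρ, h1, h2, h3, h4.symm⟩
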